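/- All positive real roots of the cubic g(u) = u^3 - T u^2 - L u + A M lie in the open interval (0,1), assuming 0 < A < 1, M < 0, Q > 0, T = 1-A+M, L = A(M+1)-Q-M. -/
import Mathlib

/-- all positive roots of g lie in (0,1). -/
theorem stmt_2 (A M Q : ℝ) (hA : 0 < A) (hA1 : A < 1) (hM : M < 0) (hQ : 0 < Q)
    (T L : ℝ) (hT : T = 1 - A + M) (hL : L = A * (M + 1) - Q - M)
    (g : ℝ → ℝ) (hg : ∀ u, g u = u ^ 3 - T * u ^ 2 - L * u + A * M) :
    ∀ u : ℝ, 0 < u → g u = 0 → u < 1 := by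
  intro u hu hgu
  by_contra h
  push_neg at h
  rw [hg, hT, hL] at hgu
  nlinarith [mul_nonneg (sq_nonneg u) (sub_nonneg.2 h),
    mul_nonneg (mul_nonneg hA.le hu.le) (sub_nonneg.2 h),
    mul_nonneg (mul_nonneg (neg_nonneg.2 hM.le) hu.le) (sub_nonneg.2 h),
    mul_nonneg (mul_nonneg hA.le (neg_nonneg.2 hM.le)) (sub_nonneg.2 h),
    mul_pos hQ hu]
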